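/- Let m be a positive integer and let r be an integer with 0 ≤ r ≤ m−1. Then for every real number x > 0, one has ((r+m)·e^{−(r+m)·x} − r·e^{−(2m+r)·x}) / (1 − e^{−m·x})² ≤ 1 / (m·x²). -/
import Mathlib


theorem stmt_11 (m : ℕ) (hm : 0 < m) (r : ℕ) (hr : r ≤ m - 1) (x : ℝ) (hx : 0 < x) :
    (((r : ℝ) + m) * Real.exp (-((r : ℝ) + m) * x) - r * Real.exp (-(2 * (m : ℝ) + r) * x)) /
        (1 - Real.exp (-(m : ℝ) * x)) ^ 2 ≤ 1 / (m * x ^ 2) := by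
  have hm' : (0:ℝ) < m := Nat.cast_pos.mpr hm
  set u : ℝ := (m : ℝ) * x with hu
  have hu0 : 0 < u := mul_pos hm' hx
  set v : ℝ := 1 - Real.exp (-u) with hv
  have hv0 : 0 < v := by
    have : Real.exp (-u) < 1 := Real.exp_lt_one_iff.mpr (by linarith)
    simp only [hv]; linarith
  have hvu : v ≤ u := by
    have := Real.add_one_le_exp (-u)
    simp only [hv]; linarith
  -- key inequality : u * exp(-u/2) ≤ v
  have hkey : u * Real.exp (-(u/2)) ≤ v := by
    have hs : u/2 ≤ Real.sinh (u/2) := Real.self_le_sinh_iff.mpr (by linarith)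
    rw [Real.sinh_eq] at hs
    have h1 : u ≤ Real.exp (u/2) - Real.exp (-(u/2)) := by linarith
    have h2 : (0:ℝ) < Real.exp (-(u/2)) := Real.exp_pos _
    have h3 : u * Real.exp (-(u/2)) ≤
        (Real.exp (u/2) - Real.exp (-(u/2))) * Real.exp (-(u/2)) := by
      exact mul_le_mul_of_nonneg_right h1 h2.le
    have h4 : Real.exp (u/2) * Real.exp (-(u/2)) = 1 := by
      rw [← Real.exp_add]; norm_num
    have h5 : Real.exp (-(u/2)) * Real.exp (-(u/2)) = Real.exp (-u) := by
      rw [← Real.exp_add]; ring_nf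
    nlinarith [h3]
  have hkey2 : u^2 * Real.exp (-u) ≤ v^2 := by
    have h5 : Real.exp (-(u/2)) * Real.exp (-(u/2)) = Real.exp (-u) := by
      rw [← Real.exp_add]; ring_nf
    nlinarith [mul_self_le_mul_self (mul_nonneg hu0.le (Real.exp_pos (-(u/2))).le) hkey, h5,
      Real.exp_pos (-(u/2))]
  -- rewrite the numerator
  have hE : Real.exp (-(2 * (m:ℝ) + r) * x) = Real.exp (-((r:ℝ) + m) * x) * Real.exp (-u) := by
    rw [← Real.exp_add, hu]; ring_nf
  have hnum : ((r : ℝ) + m) * Real.exp (-((r : ℝ) + m) * x) - r * Real.exp (-(2 * (m : ℝ) + r) * x)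
      = Real.exp (-((r:ℝ) + m) * x) * ((m:ℝ) + r * v) := by
    rw [hE, hv]; ring
  -- numerator bound
  have hEsplit : Real.exp (-((r:ℝ) + m) * x) = Real.exp (-(r:ℝ) * x) * Real.exp (-u) := by
    rw [← Real.exp_add, hu]; ring_nf
  have hr0 : (0:ℝ) ≤ r := Nat.cast_nonneg r
  have hbound : Real.exp (-((r:ℝ) + m) * x) * ((m:ℝ) + r * v) ≤ (m:ℝ) * Real.exp (-u) := by
    rw [hEsplit]
    have h6 : (m:ℝ) + r * v ≤ (m:ℝ) * Real.exp ((r:ℝ) * x) := by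
      have h7 : 1 + (r:ℝ) * x ≤ Real.exp ((r:ℝ) * x) := by
        have := Real.add_one_le_exp ((r:ℝ) * x); linarith
      have h8 : (r:ℝ) * v ≤ (r:ℝ) * u := mul_le_mul_of_nonneg_left hvu hr0
      have h9 : (r:ℝ) * u = (m:ℝ) * ((r:ℝ) * x) := by rw [hu]; ring
      nlinarith
    have h10 : Real.exp (-(r:ℝ) * x) * Real.exp ((r:ℝ) * x) = 1 := by
      rw [← Real.exp_add]; norm_num
    calc Real.exp (-(r:ℝ) * x) * Real.exp (-u) * ((m:ℝ) + r * v)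
        ≤ Real.exp (-(r:ℝ) * x) * Real.exp (-u) * ((m:ℝ) * Real.exp ((r:ℝ) * x)) := by
          exact mul_le_mul_of_nonneg_left h6 (by positivity)
      _ = (Real.exp (-(r:ℝ) * x) * Real.exp ((r:ℝ) * x)) * ((m:ℝ) * Real.exp (-u)) := by ring
      _ = (m:ℝ) * Real.exp (-u) := by rw [h10]; ring
  rw [hnum]
  have hden : (1 - Real.exp (-(m:ℝ) * x)) ^ 2 = v ^ 2 := by rw [hv, hu, neg_mul]
  rw [hden]
  have hmx2 : (0:ℝ) < (m:ℝ) * x ^ 2 := by positivity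
  rw [div_le_div_iff₀ (by positivity) hmx2]
  have : Real.exp (-((r:ℝ) + m) * x) * ((m:ℝ) + r * v) * ((m:ℝ) * x^2)
      ≤ ((m:ℝ) * Real.exp (-u)) * ((m:ℝ) * x^2) := by
    exact mul_le_mul_of_nonneg_right hbound hmx2.le
  have heq : ((m:ℝ) * Real.exp (-u)) * ((m:ℝ) * x^2) = u^2 * Real.exp (-u) := by
    rw [hu]; ring
  nlinarith [hkey2]
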